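/- Let U ⊆ ℝ² be open, ψ : U → ℝ be C³ with ψ_y < 0 on U, satisfying Δψ = -γ(ψ) for a C¹ function γ with γ ≤ 0 on the range of ψ. Define R = ½|∇ψ|² + g·y - ½Q + Γ̂(ψ) with g > 0 and Γ̂(s) = ∫₀ˢ γ(t) dt. Then R has no interior local maximum in U: there is no point A ∈ U with ∇R(A) = 0 and ΔR(A) ≤ 0. -/

import Mathlib

open Set

noncomputable def px (f : ℝ × ℝ → ℝ) (p : ℝ × ℝ) : ℝ := deriv (fun t => f (t, p.2)) p.1

noncomputable def py (f : ℝ × ℝ → ℝ) (p : ℝ × ℝ) : ℝ := deriv (fun t => f (p.1, t)) p.2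

noncomputable def Rfun (ψ : ℝ × ℝ → ℝ) (γ : ℝ → ℝ) (g Q : ℝ) : ℝ × ℝ → ℝ :=
  fun p => ((px ψ p) ^ 2 + (py ψ p) ^ 2) / 2 + g * p.2 - Q / 2 + ∫ t in (0:ℝ)..(ψ p), γ t

noncomputable def fx (f : ℝ × ℝ → ℝ) (p : ℝ × ℝ) : ℝ := fderiv ℝ f p (1, 0)
noncomputable def fy (f : ℝ × ℝ → ℝ) (p : ℝ × ℝ) : ℝ := fderiv ℝ f p (0, 1)

lemma hasDerivAt_slice_x {f : ℝ × ℝ → ℝ} {p : ℝ × ℝ} (hf : DifferentiableAt ℝ f p) :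
    HasDerivAt (fun t => f (t, p.2)) (fx f p) p.1 := by
  have h1 : HasDerivAt (fun t : ℝ => (t, p.2)) ((1:ℝ), (0:ℝ)) p.1 :=
    (hasDerivAt_id p.1).prodMk (hasDerivAt_const p.1 p.2)
  have hf' : HasFDerivAt f (fderiv ℝ f p) (p.1, p.2) := by
    simpa using hf.hasFDerivAt
  exact hf'.comp_hasDerivAt p.1 h1

lemma hasDerivAt_slice_y {f : ℝ × ℝ → ℝ} {p : ℝ × ℝ} (hf : DifferentiableAt ℝ f p) :
    HasDerivAt (fun t => f (p.1, t)) (fy f p) p.2 := by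
  have h1 : HasDerivAt (fun t : ℝ => (p.1, t)) ((0:ℝ), (1:ℝ)) p.2 :=
    (hasDerivAt_const p.2 p.1).prodMk (hasDerivAt_id p.2)
  have hf' : HasFDerivAt f (fderiv ℝ f p) (p.1, p.2) := by
    simpa using hf.hasFDerivAt
  exact hf'.comp_hasDerivAt p.2 h1

lemma px_eq {f : ℝ × ℝ → ℝ} {p : ℝ × ℝ} (hf : DifferentiableAt ℝ f p) : px f p = fx f p :=
  (hasDerivAt_slice_x hf).deriv

lemma py_eq {f : ℝ × ℝ → ℝ} {p : ℝ × ℝ} (hf : DifferentiableAt ℝ f p) : py f p = fy f p :=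
  (hasDerivAt_slice_y hf).deriv

lemma contDiff_fx {n : ℕ} {f : ℝ × ℝ → ℝ} (hf : ContDiff ℝ (n + 1) f) :
    ContDiff ℝ n (fx f) := by
  exact (hf.fderiv_right (le_of_eq (by norm_cast))).clm_apply contDiff_const

lemma contDiff_fy {n : ℕ} {f : ℝ × ℝ → ℝ} (hf : ContDiff ℝ (n + 1) f) :
    ContDiff ℝ n (fy f) := by
  exact (hf.fderiv_right (le_of_eq (by norm_cast))).clm_apply contDiff_const

lemma fderiv_apply_vec {f : ℝ × ℝ → ℝ} {p : ℝ × ℝ} (v w : ℝ × ℝ)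
    (hf : DifferentiableAt ℝ (fderiv ℝ f) p) :
    fderiv ℝ (fun q => fderiv ℝ f q v) p w = fderiv ℝ (fderiv ℝ f) p w v := by
  rw [fderiv_clm_apply hf (differentiableAt_const v)]
  simp

lemma schwarz {f : ℝ × ℝ → ℝ} (hf : ContDiff ℝ 2 f) (p : ℝ × ℝ) :
    fx (fy f) p = fy (fx f) p := by
  have hdf : Differentiable ℝ (fderiv ℝ f) := by
    have : ContDiff ℝ 1 (fderiv ℝ f) := hf.fderiv_right (le_of_eq (by norm_cast))
    exact this.differentiable (by norm_num)
  have hsymm := second_derivative_symmetric (f := f) (f' := fderiv ℝ f)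
    (f'' := fderiv ℝ (fderiv ℝ f) p)
    (fun y => ((hf.differentiable (by norm_num)) y).hasFDerivAt)
    ((hdf p).hasFDerivAt) ((1:ℝ),(0:ℝ)) ((0:ℝ),(1:ℝ))
  show fderiv ℝ (fun q => fderiv ℝ f q (0,1)) p (1,0) = fderiv ℝ (fun q => fderiv ℝ f q (1,0)) p (0,1)
  rw [fderiv_apply_vec _ _ (hdf p), fderiv_apply_vec _ _ (hdf p)]
  exact hsymm

lemma hasDerivAt_intInt {γ : ℝ → ℝ} (hγ : Continuous γ) (s : ℝ) :
    HasDerivAt (fun u => ∫ t in (0:ℝ)..u, γ t) (γ s) s :=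
  intervalIntegral.integral_hasDerivAt_right (hγ.intervalIntegrable 0 s)
    (hγ.stronglyMeasurableAtFilter _ _) hγ.continuousAt
set_option maxHeartbeats 2000000 in
theorem stmt3 (ψ : ℝ × ℝ → ℝ) (γ : ℝ → ℝ) (g Q : ℝ) (U : Set (ℝ × ℝ)) (hU : IsOpen U)
    (hψ : ContDiff ℝ 3 ψ) (hγ : ContDiff ℝ 1 γ) (hg : 0 < g)
    (hpde : ∀ p ∈ U, px (px ψ) p + py (py ψ) p = -γ (ψ p))
    (hψy : ∀ p ∈ U, py ψ p < 0)
    (hγneg : ∀ p ∈ U, γ (ψ p) ≤ 0) :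
    ¬ ∃ A ∈ U,
        px (Rfun ψ γ g Q) A = 0 ∧ py (Rfun ψ γ g Q) A = 0 ∧
        px (px (Rfun ψ γ g Q)) A + py (py (Rfun ψ γ g Q)) A ≤ 0 := by
  rintro ⟨A, hA, hRx, hRy, hΔ⟩
  have h3 : ContDiff ℝ ((2:ℕ) + 1) ψ := by exact_mod_cast hψ
  have hψd : Differentiable ℝ ψ := hψ.differentiable (by norm_num)
  set ψ1 := fx ψ with hψ1def
  set ψ2 := fy ψ with hψ2def
  have hψ1c : ContDiff ℝ ((1:ℕ) + 1) ψ1 := by exact_mod_cast contDiff_fx h3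
  have hψ2c : ContDiff ℝ ((1:ℕ) + 1) ψ2 := by exact_mod_cast contDiff_fy h3
  have hψ1d : Differentiable ℝ ψ1 := hψ1c.differentiable (by norm_num)
  have hψ2d : Differentiable ℝ ψ2 := hψ2c.differentiable (by norm_num)
  set ψ11 := fx ψ1 with hψ11def
  set ψ12 := fy ψ1 with hψ12def
  set ψ21 := fx ψ2 with hψ21def
  set ψ22 := fy ψ2 with hψ22def
  have hψ11d : Differentiable ℝ ψ11 :=
    (contDiff_fx (n := 1) hψ1c).differentiable (by norm_num)
  have hψ12d : Differentiable ℝ ψ12 :=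
    (contDiff_fy (n := 1) hψ1c).differentiable (by norm_num)
  have hψ21d : Differentiable ℝ ψ21 :=
    (contDiff_fx (n := 1) hψ2c).differentiable (by norm_num)
  have hψ22d : Differentiable ℝ ψ22 :=
    (contDiff_fy (n := 1) hψ2c).differentiable (by norm_num)
  have hγd : Differentiable ℝ γ := hγ.differentiable (by norm_num)
  have hγc : Continuous γ := hγd.continuous
  -- Schwarz
  have h2112 : ψ21 = ψ12 := funext fun p => schwarz (hψ.of_le (by norm_num)) p
  have hsch1 : fx ψ12 A = fy ψ11 A := schwarz (by exact_mod_cast hψ1c) A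
  have hsch2 : fy ψ21 A = fx ψ22 A := (schwarz (by exact_mod_cast hψ2c) A).symm
  -- Rewrite Rfun
  set Γ : ℝ → ℝ := fun s => ∫ t in (0:ℝ)..s, γ t with hΓdef
  have hRF : Rfun ψ γ g Q =
      fun p => ((ψ1 p) ^ 2 + (ψ2 p) ^ 2) / 2 + g * p.2 - Q / 2 + Γ (ψ p) := by
    funext p
    simp only [Rfun]
    rw [px_eq (hψd p), py_eq (hψd p)]
  set F : ℝ × ℝ → ℝ :=
      fun p => ((ψ1 p) ^ 2 + (ψ2 p) ^ 2) / 2 + g * p.2 - Q / 2 + Γ (ψ p) with hFdef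
  rw [hRF] at hRx hRy hΔ
  -- first derivatives of F
  have hGx : ∀ p : ℝ × ℝ, HasDerivAt (fun t => F (t, p.2))
      (ψ1 p * ψ11 p + ψ2 p * ψ21 p + γ (ψ p) * ψ1 p) p.1 := by
    intro p
    have h1 : HasDerivAt (fun t => ψ1 (t, p.2)) (ψ11 p) p.1 := hasDerivAt_slice_x (hψ1d p)
    have h2 : HasDerivAt (fun t => ψ2 (t, p.2)) (ψ21 p) p.1 := hasDerivAt_slice_x (hψ2d p)
    have hs : HasDerivAt (fun t => ψ (t, p.2)) (ψ1 p) p.1 := hasDerivAt_slice_x (hψd p)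
    have hΓc : HasDerivAt (fun t => Γ (ψ (t, p.2))) (γ (ψ p) * ψ1 p) p.1 :=
      by
        have := (hasDerivAt_intInt hγc (ψ (p.1, p.2))).comp p.1 hs
        exact this
    have hmain := ((((h1.pow 2).add (h2.pow 2)).div_const 2).add_const (g * p.2)).sub_const
      (Q / 2) |>.add hΓc
    refine hmain.congr_deriv ?_
    simp only [Prod.mk.eta]
    ring
  have hGy : ∀ p : ℝ × ℝ, HasDerivAt (fun t => F (p.1, t))
      (ψ1 p * ψ12 p + ψ2 p * ψ22 p + g + γ (ψ p) * ψ2 p) p.2 := by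
    intro p
    have h1 : HasDerivAt (fun t => ψ1 (p.1, t)) (ψ12 p) p.2 := hasDerivAt_slice_y (hψ1d p)
    have h2 : HasDerivAt (fun t => ψ2 (p.1, t)) (ψ22 p) p.2 := hasDerivAt_slice_y (hψ2d p)
    have hs : HasDerivAt (fun t => ψ (p.1, t)) (ψ2 p) p.2 := hasDerivAt_slice_y (hψd p)
    have hΓc : HasDerivAt (fun t => Γ (ψ (p.1, t))) (γ (ψ p) * ψ2 p) p.2 :=
      by
        have := (hasDerivAt_intInt hγc (ψ (p.1, p.2))).comp p.2 hs
        exact this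
    have hlin : HasDerivAt (fun t : ℝ => g * t) g p.2 := by
      simpa using (hasDerivAt_id p.2).const_mul g
    have hmain := ((((h1.pow 2).add (h2.pow 2)).div_const 2).add hlin).sub_const
      (Q / 2) |>.add hΓc
    refine hmain.congr_deriv ?_
    simp only [Prod.mk.eta]
    ring
  have hpxF : px F = fun p => ψ1 p * ψ11 p + ψ2 p * ψ21 p + γ (ψ p) * ψ1 p :=
    funext fun p => (hGx p).deriv
  have hpyF : py F = fun p => ψ1 p * ψ12 p + ψ2 p * ψ22 p + g + γ (ψ p) * ψ2 p :=
    funext fun p => (hGy p).deriv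
  rw [hpxF] at hRx hΔ
  rw [hpyF] at hRy hΔ
  simp only [] at hRx hRy
  -- second derivatives at A
  have hd2x : HasDerivAt
      (fun t => ψ1 (t, A.2) * ψ11 (t, A.2) + ψ2 (t, A.2) * ψ21 (t, A.2)
        + γ (ψ (t, A.2)) * ψ1 (t, A.2))
      (ψ11 A * ψ11 A + ψ1 A * fx ψ11 A + ψ21 A * ψ21 A + ψ2 A * fx ψ21 A
        + deriv γ (ψ A) * ψ1 A * ψ1 A + γ (ψ A) * ψ11 A) A.1 := by
    have h1 : HasDerivAt (fun t => ψ1 (t, A.2)) (ψ11 A) A.1 := hasDerivAt_slice_x (hψ1d A)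
    have h11 := hasDerivAt_slice_x (hψ11d A)
    have h2 : HasDerivAt (fun t => ψ2 (t, A.2)) (ψ21 A) A.1 := hasDerivAt_slice_x (hψ2d A)
    have h21 := hasDerivAt_slice_x (hψ21d A)
    have hs : HasDerivAt (fun t => ψ (t, A.2)) (ψ1 A) A.1 := hasDerivAt_slice_x (hψd A)
    have hγs : HasDerivAt (fun t => γ (ψ (t, A.2))) (deriv γ (ψ A) * ψ1 A) A.1 :=
      ((hγd (ψ A)).hasDerivAt).comp A.1 hs
    have hmain := ((h1.mul h11).add (h2.mul h21)).add (hγs.mul h1)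
    refine hmain.congr_deriv ?_
    simp only [Prod.mk.eta]
    ring
  have hd2y : HasDerivAt
      (fun t => ψ1 (A.1, t) * ψ12 (A.1, t) + ψ2 (A.1, t) * ψ22 (A.1, t) + g
        + γ (ψ (A.1, t)) * ψ2 (A.1, t))
      (ψ12 A * ψ12 A + ψ1 A * fy ψ12 A + ψ22 A * ψ22 A + ψ2 A * fy ψ22 A
        + deriv γ (ψ A) * ψ2 A * ψ2 A + γ (ψ A) * ψ22 A) A.2 := by
    have h1 : HasDerivAt (fun t => ψ1 (A.1, t)) (ψ12 A) A.2 := hasDerivAt_slice_y (hψ1d A)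
    have h12 := hasDerivAt_slice_y (hψ12d A)
    have h2 : HasDerivAt (fun t => ψ2 (A.1, t)) (ψ22 A) A.2 := hasDerivAt_slice_y (hψ2d A)
    have h22 := hasDerivAt_slice_y (hψ22d A)
    have hs : HasDerivAt (fun t => ψ (A.1, t)) (ψ2 A) A.2 := hasDerivAt_slice_y (hψd A)
    have hγs : HasDerivAt (fun t => γ (ψ (A.1, t))) (deriv γ (ψ A) * ψ2 A) A.2 :=
      ((hγd (ψ A)).hasDerivAt).comp A.2 hs
    have hmain := (((h1.mul h12).add (h2.mul h22)).add_const g).add (hγs.mul h2)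
    refine hmain.congr_deriv ?_
    simp only [Prod.mk.eta]
    ring
  have e1 : px (fun p => ψ1 p * ψ11 p + ψ2 p * ψ21 p + γ (ψ p) * ψ1 p) A =
      ψ11 A * ψ11 A + ψ1 A * fx ψ11 A + ψ21 A * ψ21 A + ψ2 A * fx ψ21 A
        + deriv γ (ψ A) * ψ1 A * ψ1 A + γ (ψ A) * ψ11 A := hd2x.deriv
  have e2 : py (fun p => ψ1 p * ψ12 p + ψ2 p * ψ22 p + g + γ (ψ p) * ψ2 p) A =
      ψ12 A * ψ12 A + ψ1 A * fy ψ12 A + ψ22 A * ψ22 A + ψ2 A * fy ψ22 A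
        + deriv γ (ψ A) * ψ2 A * ψ2 A + γ (ψ A) * ψ22 A := hd2y.deriv
  rw [e1, e2] at hΔ
  -- the PDE on U
  have hpxψ : px ψ = ψ1 := funext fun q => px_eq (hψd q)
  have hpyψ : py ψ = ψ2 := funext fun q => py_eq (hψd q)
  have hL : ∀ p ∈ U, ψ11 p + ψ22 p = -γ (ψ p) := by
    intro p hp
    have h := hpde p hp
    rwa [hpxψ, hpyψ, px_eq (hψ1d p), py_eq (hψ2d p)] at h
  -- derivative of the PDE identity at A
  have hAU : (A.1, A.2) ∈ U := by simpa using hA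
  have hkeyx : fx ψ11 A + fx ψ22 A = -(deriv γ (ψ A) * ψ1 A) := by
    have hL1 : HasDerivAt (fun t => ψ11 (t, A.2) + ψ22 (t, A.2))
        (fx ψ11 A + fx ψ22 A) A.1 :=
      (hasDerivAt_slice_x (hψ11d A)).add (hasDerivAt_slice_x (hψ22d A))
    have hR1 : HasDerivAt (fun t => -γ (ψ (t, A.2))) (-(deriv γ (ψ A) * ψ1 A)) A.1 :=
      (((hγd (ψ A)).hasDerivAt).comp A.1 (hasDerivAt_slice_x (hψd A))).neg
    have hopen : IsOpen {t : ℝ | (t, A.2) ∈ U} :=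
      hU.preimage (by fun_prop)
    have hev : (fun t => ψ11 (t, A.2) + ψ22 (t, A.2)) =ᶠ[nhds A.1]
        (fun t => -γ (ψ (t, A.2))) := by
      filter_upwards [hopen.mem_nhds hAU] with t ht
      exact hL _ ht
    exact ((hL1.congr_of_eventuallyEq hev.symm).unique hR1)
  have hkeyy : fy ψ11 A + fy ψ22 A = -(deriv γ (ψ A) * ψ2 A) := by
    have hL1 : HasDerivAt (fun t => ψ11 (A.1, t) + ψ22 (A.1, t))
        (fy ψ11 A + fy ψ22 A) A.2 :=
      (hasDerivAt_slice_y (hψ11d A)).add (hasDerivAt_slice_y (hψ22d A))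
    have hR1 : HasDerivAt (fun t => -γ (ψ (A.1, t))) (-(deriv γ (ψ A) * ψ2 A)) A.2 :=
      (((hγd (ψ A)).hasDerivAt).comp A.2 (hasDerivAt_slice_y (hψd A))).neg
    have hopen : IsOpen {t : ℝ | (A.1, t) ∈ U} :=
      hU.preimage (by fun_prop)
    have hev : (fun t => ψ11 (A.1, t) + ψ22 (A.1, t)) =ᶠ[nhds A.2]
        (fun t => -γ (ψ (A.1, t))) := by
      filter_upwards [hopen.mem_nhds hAU] with t ht
      exact hL _ ht
    exact ((hL1.congr_of_eventuallyEq hev.symm).unique hR1)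
  -- scalar algebra
  rw [h2112] at hRx hΔ
  rw [show fx ψ12 A = fy ψ11 A from hsch1] at hΔ
  rw [show fy ψ12 A = fx ψ22 A from by rw [← h2112]; exact hsch2] at hΔ
  have htrace := hL A hA
  have hq : ψ2 A < 0 := by
    have := hψy A hA
    rwa [hpyψ] at this
  have hγ0 : γ (ψ A) ≤ 0 := hγneg A hA
  set a := ψ11 A
  set b := ψ12 A
  set c := ψ22 A
  set p := ψ1 A
  set q := ψ2 A
  set γ0 := γ (ψ A)
  set γ1 := deriv γ (ψ A)
  set t1 := fx ψ11 A
  set t2 := fx ψ22 A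
  set t3 := fy ψ11 A
  set t4 := fy ψ22 A
  -- hRx : p * a + q * b + γ0 * p = 0
  -- hRy : p * b + q * c + g + γ0 * q = 0
  -- hΔ : a*a + p*t1 + b*b + q*t3 + γ1*p*p + γ0*a + b*b + p*t2 + c*c + q*t4 + γ1*q*q + γ0*c ≤ 0
  have hquad : a ^ 2 + 2 * b ^ 2 + c ^ 2 ≤ γ0 ^ 2 := by
    have h1 : p * t1 + p * t2 = -(γ1 * p * p) := by linear_combination p * hkeyx
    have h2 : q * t3 + q * t4 = -(γ1 * q * q) := by linear_combination q * hkeyy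
    have h3 : γ0 * a + γ0 * c = -γ0 ^ 2 := by linear_combination γ0 * htrace
    nlinarith [hΔ, h1, h2, h3]
  have hqb : q * b = p * c := by linear_combination hRx - p * htrace
  have hpb : p * b = q * a - g := by linear_combination hRy - q * htrace
  have hac : 0 ≤ a + c := by linarith [htrace, hγ0]
  have hγ0eq : γ0 = -(a + c) := by linarith [htrace]
  have hb2 : b ^ 2 ≤ a * c := by
    rw [hγ0eq] at hquad
    nlinarith [hquad]
  have hpc : p ^ 2 * c = q ^ 2 * a - g * q := by linear_combination q * hpb - p * hqb
  have hq2 : q ^ 2 * (b ^ 2 - a * c) = -(g * q * c) := by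
    linear_combination (q * b + p * c) * hqb + c * hpc
  have hgqc : 0 ≤ g * (q * c) := by
    nlinarith [hq2, mul_nonneg (sq_nonneg q) (sub_nonneg.mpr hb2)]
  have hqc : 0 ≤ q * c := (mul_nonneg_iff_of_pos_left hg).mp hgqc
  have hc0 : c ≤ 0 := by nlinarith [hqc, hq]
  rcases lt_or_eq_of_le hc0 with hclt | hceq
  · nlinarith [hb2, sq_nonneg b, hac, hclt]
  · have hb0 : b = 0 := by nlinarith [hb2, sq_nonneg b]
    nlinarith [hpb, hb0, hac, hq, hg]
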